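/- Let G be a connected simple graph of order n ≥ 3 with maximum degree Δ(G). Then the distinguishing number of the middle graph satisfies D(M(G)) ≤ Δ(G). Moreover, this bound is sharp: if G ≅ C_n is a cycle of order n ≥ 3, then D(M(G)) = 2 = Δ(G). -/

import Mathlib

open SimpleGraph

/-- The subdivision graph `S(G)`: each edge `{u,v}` of `G` is replaced by a new
vertex (the element of `G.edgeSet`) adjacent to both `u` and `v`. -/
def subdivisionGraph {V : Type*} (G : SimpleGraph V) : SimpleGraph (V ⊕ G.edgeSet) where
  Adj x y :=
    match x, y with
    | Sum.inl u, Sum.inr e => u ∈ (e : Sym2 V)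
    | Sum.inr e, Sum.inl u => u ∈ (e : Sym2 V)
    | _, _ => False
  symm := ⟨by rintro (u | e) (v | f) h <;> simp_all⟩
  loopless := ⟨by rintro (u | e) h <;> simp_all⟩

/-- The central graph `C(G)`: obtained from the subdivision graph `S(G)` by joining
every pair of distinct vertices of `G` that are non-adjacent in `G`. -/
def centralGraph {V : Type*} (G : SimpleGraph V) : SimpleGraph (V ⊕ G.edgeSet) where
  Adj x y :=
    match x, y with
    | Sum.inl u, Sum.inl v => u ≠ v ∧ ¬ G.Adj u v
    | Sum.inl u, Sum.inr e => u ∈ (e : Sym2 V)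
    | Sum.inr e, Sum.inl u => u ∈ (e : Sym2 V)
    | Sum.inr _, Sum.inr _ => False
  symm := ⟨by
    rintro (u | e) (v | f) h
    · exact ⟨h.1.symm, fun a => h.2 a.symm⟩
    · exact h
    · exact h
    · exact h⟩
  loopless := ⟨by
    rintro (u | e) h
    · exact h.1 rfl
    · exact h⟩

/-- The middle graph `M(G)`: obtained from the subdivision graph `S(G)` by joining
each pair of distinct subdivided vertices corresponding to adjacent edges of `G`. -/
def middleGraph {V : Type*} (G : SimpleGraph V) : SimpleGraph (V ⊕ G.edgeSet) where
  Adj x y :=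
    match x, y with
    | Sum.inl u, Sum.inr e => u ∈ (e : Sym2 V)
    | Sum.inr e, Sum.inl u => u ∈ (e : Sym2 V)
    | Sum.inr e, Sum.inr f => e ≠ f ∧ ∃ u, u ∈ (e : Sym2 V) ∧ u ∈ (f : Sym2 V)
    | Sum.inl _, Sum.inl _ => False
  symm := ⟨by
    rintro (u | e) (v | f) h
    · exact h
    · exact h
    · exact h
    · exact ⟨h.1.symm, h.2.imp fun u hu => ⟨hu.2, hu.1⟩⟩⟩
  loopless := ⟨by
    rintro (u | e) h
    · exact h
    · exact h.1 rfl⟩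

/-- The line graph `L(G)`: vertices are the edges of `G`, two distinct edges being
adjacent when they share an endpoint. -/
def lineG {V : Type*} (G : SimpleGraph V) : SimpleGraph G.edgeSet where
  Adj e f := e ≠ f ∧ ∃ u, u ∈ (e : Sym2 V) ∧ u ∈ (f : Sym2 V)
  symm := ⟨fun e f h => ⟨h.1.symm, h.2.imp fun u hu => ⟨hu.2, hu.1⟩⟩⟩
  loopless := ⟨fun e h => h.1 rfl⟩

/-- The endline graph `G⁺`: to each vertex `v` of `G` we attach a new pendant
vertex; `Sum.inl` is the copy of `V(G)` and `Sum.inr` are the new vertices. -/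
def endlineGraph {V : Type*} (G : SimpleGraph V) : SimpleGraph (V ⊕ V) where
  Adj x y :=
    match x, y with
    | Sum.inl u, Sum.inl v => G.Adj u v
    | Sum.inl u, Sum.inr v => u = v
    | Sum.inr u, Sum.inl v => u = v
    | Sum.inr _, Sum.inr _ => False
  symm := ⟨by
    rintro (u | u) (v | v) h
    · exact h.symm
    · exact h.symm
    · exact h.symm
    · exact h⟩
  loopless := ⟨by
    rintro (u | u) h
    · exact G.loopless.irrefl u h
    · exact h⟩

/-- The join `G₁ + G₂` of two vertex-disjoint graphs: their disjoint union together
with all edges between the two vertex sets. -/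
def joinGraph {V₁ V₂ : Type*} (G₁ : SimpleGraph V₁) (G₂ : SimpleGraph V₂) :
    SimpleGraph (V₁ ⊕ V₂) where
  Adj x y :=
    match x, y with
    | Sum.inl u, Sum.inl v => G₁.Adj u v
    | Sum.inr u, Sum.inr v => G₂.Adj u v
    | Sum.inl _, Sum.inr _ => True
    | Sum.inr _, Sum.inl _ => True
  symm := ⟨by
    rintro (u | u) (v | v) h
    · exact h.symm
    · trivial
    · trivial
    · exact h.symm⟩
  loopless := ⟨by
    rintro (u | u) h
    · exact G₁.loopless.irrefl u h
    · exact G₂.loopless.irrefl u h⟩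

/-- The maximum degree `Δ(H)` of a graph (as a supremum of cardinalities of
neighborhoods, which agrees with the usual maximum degree for finite graphs). -/
noncomputable def maxDeg {W : Type*} (H : SimpleGraph W) : ℕ :=
  sSup {k | ∃ v : W, k = (H.neighborSet v).ncard}

/-- A graph is regular if all vertices have the same degree. -/
def IsRegularGraph {W : Type*} (H : SimpleGraph W) : Prop :=
  ∀ u v : W, (H.neighborSet u).ncard = (H.neighborSet v).ncard

/-- The distinguishing number `D(H)`: the least `d` such that `H` admits a vertex
coloring with `d` colors preserved only by the identity automorphism. -/
noncomputable def distinguishingNumber {W : Type*} (H : SimpleGraph W) : ℕ :=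
  sInf {d | ∃ c : W → Fin d, ∀ φ : H ≃g H, (∀ v, c (φ v) = c v) → ∀ v, φ v = v}

/-- The distinguishing index `D'(H)`: the least `d` such that `H` admits an edge
coloring with `d` colors preserved only by the identity automorphism. -/
noncomputable def distinguishingIndex {W : Type*} (H : SimpleGraph W) : ℕ :=
  sInf {d | ∃ c : H.edgeSet → Fin d,
    ∀ φ : H ≃g H, (∀ e, c (φ.mapEdgeSet e) = c e) → ∀ v, φ v = v}

/-- A proper total coloring of `H` with `d` colors: adjacent vertices, adjacent
edges, and incident vertex/edge pairs receive distinct colors. -/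
def IsProperTotalColoring {W : Type*} (H : SimpleGraph W) {d : ℕ}
    (f : W ⊕ H.edgeSet → Fin d) : Prop :=
  (∀ u v : W, H.Adj u v → f (Sum.inl u) ≠ f (Sum.inl v)) ∧
  (∀ e e' : H.edgeSet, e ≠ e' → (∃ u, u ∈ (e : Sym2 W) ∧ u ∈ (e' : Sym2 W)) →
    f (Sum.inr e) ≠ f (Sum.inr e')) ∧
  (∀ (v : W) (e : H.edgeSet), v ∈ (e : Sym2 W) → f (Sum.inl v) ≠ f (Sum.inr e))

/-- An automorphism `φ` preserves a total coloring `f`. -/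
def PreservesTotalColoring {W : Type*} (H : SimpleGraph W) {d : ℕ}
    (f : W ⊕ H.edgeSet → Fin d) (φ : H ≃g H) : Prop :=
  (∀ v : W, f (Sum.inl (φ v)) = f (Sum.inl v)) ∧
  (∀ e : H.edgeSet, f (Sum.inr (φ.mapEdgeSet e)) = f (Sum.inr e))

/-- The total chromatic number `χ''(H)`. -/
noncomputable def totalChromaticNumber {W : Type*} (H : SimpleGraph W) : ℕ :=
  sInf {d | ∃ f : W ⊕ H.edgeSet → Fin d, IsProperTotalColoring H f}

/-- The total distinguishing chromatic number `χ''_D(H)`: the least `d` such that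
`H` has a proper total coloring with `d` colors preserved only by the identity. -/
noncomputable def totalDistinguishingChromaticNumber {W : Type*} (H : SimpleGraph W) : ℕ :=
  sInf {d | ∃ f : W ⊕ H.edgeSet → Fin d, IsProperTotalColoring H f ∧
    ∀ φ : H ≃g H, PreservesTotalColoring H f φ → ∀ v, φ v = v}

/-- The color class `C_H(u)` of a vertex under a total coloring: the color of `u`
together with the colors of the edges incident to `u`. -/
def totalColorClass {W : Type*} (H : SimpleGraph W) {d : ℕ}
    (f : W ⊕ H.edgeSet → Fin d) (u : W) : Set (Fin d) :=
  {f (Sum.inl u)} ∪ {x | ∃ e : H.edgeSet, u ∈ (e : Sym2 W) ∧ x = f (Sum.inr e)}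

/-- An AVD-total coloring: a proper total coloring in which adjacent vertices have
distinct color classes. -/
def IsAVDTotalColoring {W : Type*} (H : SimpleGraph W) {d : ℕ}
    (f : W ⊕ H.edgeSet → Fin d) : Prop :=
  IsProperTotalColoring H f ∧
  ∀ u v : W, H.Adj u v → totalColorClass H f u ≠ totalColorClass H f v

/-- The AVD-total chromatic number `χ''ₐ(H)`. -/
noncomputable def avdTotalChromaticNumber {W : Type*} (H : SimpleGraph W) : ℕ :=
  sInf {d | ∃ f : W ⊕ H.edgeSet → Fin d, IsAVDTotalColoring H f}

/-- A total dominator coloring: a proper vertex coloring such that every vertex is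
adjacent to every vertex of some (nonempty) color class. -/
def IsTotalDominatorColoring {W : Type*} (H : SimpleGraph W) {d : ℕ}
    (c : W → Fin d) : Prop :=
  (∀ u v : W, H.Adj u v → c u ≠ c v) ∧
  (∀ v : W, ∃ i : Fin d, (∃ w, c w = i) ∧ ∀ w, c w = i → H.Adj v w)

/-- The total dominator chromatic number `χᵗ_d(H)`. -/
noncomputable def tdChromaticNumber {W : Type*} (H : SimpleGraph W) : ℕ :=
  sInf {d | ∃ c : W → Fin d, IsTotalDominatorColoring H c}


section AuxProofs

variable {V : Type*}

lemma mid_adj_inl_inl {G : SimpleGraph V} {u v : V} :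
    ¬ (middleGraph G).Adj (Sum.inl u) (Sum.inl v) := fun h => h

lemma mid_adj_inl_inr {G : SimpleGraph V} {u : V} {e : G.edgeSet} :
    (middleGraph G).Adj (Sum.inl u) (Sum.inr e) ↔ u ∈ (e : Sym2 V) := Iff.rfl

lemma mid_adj_inr_inl {G : SimpleGraph V} {u : V} {e : G.edgeSet} :
    (middleGraph G).Adj (Sum.inr e) (Sum.inl u) ↔ u ∈ (e : Sym2 V) := Iff.rfl

lemma mid_adj_inr_inr {G : SimpleGraph V} {e f : G.edgeSet} :
    (middleGraph G).Adj (Sum.inr e) (Sum.inr f) ↔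
      e ≠ f ∧ ∃ u, u ∈ (e : Sym2 V) ∧ u ∈ (f : Sym2 V) := Iff.rfl

lemma edge_exists_pair {G : SimpleGraph V} (e : G.edgeSet) :
    ∃ a b, a ≠ b ∧ (e : Sym2 V) = s(a, b) := by
  obtain ⟨e, he⟩ := e
  induction e using Sym2.ind with
  | _ a b => exact ⟨a, b, (G.mem_edgeSet.mp he).ne, rfl⟩

lemma mid_inl_inl {G : SimpleGraph V} (φ : middleGraph G ≃g middleGraph G) (v : V) :
    ∃ w, φ (Sum.inl v) = Sum.inl w := by
  cases hx : φ (Sum.inl v) with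
  | inl w => exact ⟨w, rfl⟩
  | inr e =>
    exfalso
    obtain ⟨a, b, hab, he⟩ := edge_exists_pair e
    have ha : (middleGraph G).Adj (Sum.inr e) (Sum.inl a) := by
      rw [mid_adj_inr_inl, he]; exact Sym2.mem_mk_left a b
    have hb : (middleGraph G).Adj (Sum.inr e) (Sum.inl b) := by
      rw [mid_adj_inr_inl, he]; exact Sym2.mem_mk_right a b
    have hsv : φ.symm (Sum.inr e) = Sum.inl v := by rw [← hx, RelIso.symm_apply_apply]
    have ha' : (middleGraph G).Adj (Sum.inl v) (φ.symm (Sum.inl a)) := by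
      have := φ.symm.map_rel_iff.mpr ha
      rwa [hsv] at this
    have hb' : (middleGraph G).Adj (Sum.inl v) (φ.symm (Sum.inl b)) := by
      have := φ.symm.map_rel_iff.mpr hb
      rwa [hsv] at this
    cases hya : φ.symm (Sum.inl a) with
    | inl w => rw [hya] at ha'; exact mid_adj_inl_inl ha'
    | inr f1 =>
      cases hyb : φ.symm (Sum.inl b) with
      | inl w => rw [hyb] at hb'; exact mid_adj_inl_inl hb'
      | inr f2 =>
        rw [hya] at ha'; rw [hyb] at hb'
        have hne : f1 ≠ f2 := by
          intro h
          apply hab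
          have : φ.symm (Sum.inl a) = φ.symm (Sum.inl b) := by rw [hya, hyb, h]
          simpa using φ.symm.injective this
        have hadj12 : (middleGraph G).Adj (Sum.inr f1) (Sum.inr f2) :=
          ⟨hne, v, (mid_adj_inl_inr.mp ha'), (mid_adj_inl_inr.mp hb')⟩
        have := φ.map_rel_iff.mpr hadj12
        rw [show (φ (Sum.inr f1) : V ⊕ G.edgeSet) = Sum.inl a by
              rw [← hya, RelIso.apply_symm_apply],
            show (φ (Sum.inr f2) : V ⊕ G.edgeSet) = Sum.inl b by
              rw [← hyb, RelIso.apply_symm_apply]] at this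
        exact mid_adj_inl_inl this

lemma exists_sigma {G : SimpleGraph V} (φ : middleGraph G ≃g middleGraph G) :
    ∃ σ : V → V, Function.Injective σ ∧ (∀ v, φ (Sum.inl v) = Sum.inl (σ v)) ∧
      (∀ u v, G.Adj u v → G.Adj (σ u) (σ v)) ∧
      (∀ (e f : G.edgeSet), φ (Sum.inr e) = Sum.inr f →
        (f : Sym2 V) = Sym2.map σ (e : Sym2 V)) ∧
      (∀ e : G.edgeSet, ∃ f, φ (Sum.inr e) = Sum.inr f) := by
  choose σ hσ using mid_inl_inl φ
  have hinj : Function.Injective σ := by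
    intro a b hab
    have : φ (Sum.inl a) = φ (Sum.inl b) := by rw [hσ, hσ, hab]
    simpa using φ.injective this
  have hE : ∀ e : G.edgeSet, ∃ f, φ (Sum.inr e) = Sum.inr f := by
    intro e
    cases hx : φ (Sum.inr e) with
    | inr f => exact ⟨f, rfl⟩
    | inl w =>
      exfalso
      obtain ⟨w', hw'⟩ := mid_inl_inl φ.symm w
      have : φ.symm (Sum.inl w) = Sum.inr e := by rw [← hx, RelIso.symm_apply_apply]
      rw [this] at hw'
      exact (Sum.inr_ne_inl hw')
  have hmem : ∀ (e f : G.edgeSet), φ (Sum.inr e) = Sum.inr f →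
      ∀ v, v ∈ (e : Sym2 V) → σ v ∈ (f : Sym2 V) := by
    intro e f hef v hv
    have h1 : (middleGraph G).Adj (Sum.inl v) (Sum.inr e) := hv
    have h2 := φ.map_rel_iff.mpr h1
    rw [hσ, hef] at h2
    exact h2
  have hτ : ∀ (e f : G.edgeSet), φ (Sum.inr e) = Sum.inr f →
      (f : Sym2 V) = Sym2.map σ (e : Sym2 V) := by
    intro e f hef
    obtain ⟨a, b, hab, he⟩ := edge_exists_pair e
    have ha := hmem e f hef a (by rw [he]; exact Sym2.mem_mk_left a b)
    have hb := hmem e f hef b (by rw [he]; exact Sym2.mem_mk_right a b)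
    have hfe : (f : Sym2 V) = s(σ a, σ b) :=
      (Sym2.mem_and_mem_iff (fun h => hab (hinj h))).mp ⟨ha, hb⟩
    rw [hfe, he, Sym2.map_pair_eq]
  refine ⟨σ, hinj, hσ, ?_, hτ, hE⟩
  intro u v huv
  obtain ⟨f, hf⟩ := hE ⟨s(u, v), huv⟩
  have h1 := hτ _ f hf
  have h2 := f.2
  rw [h1] at h2
  rw [Sym2.map_pair_eq] at h2
  exact G.mem_edgeSet.mp h2

lemma dist_map_le {G : SimpleGraph V} (hconn : G.Connected) (σ : V → V)
    (hadj : ∀ u v, G.Adj u v → G.Adj (σ u) (σ v)) (a b : V) :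
    G.dist (σ a) (σ b) ≤ G.dist a b := by
  obtain ⟨p, hp⟩ := hconn.exists_walk_length_eq_dist a b
  have := SimpleGraph.dist_le (p.map ⟨σ, fun h => hadj _ _ h⟩)
  rwa [SimpleGraph.Walk.length_map, hp] at this

lemma exists_injOn_fin [Fintype V] {S : Set V} {d : ℕ} (hS : S.ncard ≤ d) (hd : 0 < d) :
    ∃ g : V → Fin d, Set.InjOn g S := by
  classical
  have hcard : Fintype.card S ≤ d := by
    rwa [← Nat.card_coe_set_eq, Nat.card_eq_fintype_card] at hS
  refine ⟨fun v => if h : v ∈ S then (Fin.castLE hcard) (Fintype.equivFin S ⟨v, h⟩)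
    else ⟨0, hd⟩, ?_⟩
  intro x hx y hy hxy
  simp only [dif_pos hx, dif_pos hy] at hxy
  have h2 : (Fintype.equivFin S) ⟨x, hx⟩ = (Fintype.equivFin S) ⟨y, hy⟩ :=
    Fin.castLE_injective hcard hxy
  have := (Fintype.equivFin S).injective h2
  exact congrArg Subtype.val this

lemma bddAbove_degSet [Fintype V] (G : SimpleGraph V) :
    BddAbove {k | ∃ v : V, k = (G.neighborSet v).ncard} := by
  refine ⟨Fintype.card V, ?_⟩
  rintro k ⟨v, rfl⟩
  refine le_trans (Set.ncard_le_ncard (Set.subset_univ _) (Set.toFinite _)) ?_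
  rw [Set.ncard_univ, Nat.card_eq_fintype_card]

lemma ncard_le_maxDeg [Fintype V] (G : SimpleGraph V) (v : V) :
    (G.neighborSet v).ncard ≤ maxDeg G :=
  le_csSup (bddAbove_degSet G) ⟨v, rfl⟩

lemma two_le_maxDeg [Fintype V] {G : SimpleGraph V} (hconn : G.Connected)
    (hn : 3 ≤ Fintype.card V) : 2 ≤ maxDeg G := by
  have hvx : ∃ v : V, 2 ≤ (G.neighborSet v).ncard := by
    by_contra hno
    push_neg at hno
    have hone : ∀ v, (G.neighborSet v).ncard ≤ 1 := fun v => by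
      have := hno v; omega
    have hnt : Nontrivial V := Fintype.one_lt_card_iff_nontrivial.mp (by omega)
    obtain ⟨a, b, hab⟩ := hnt.exists_pair_ne
    obtain ⟨p, hp⟩ := hconn.exists_walk_length_eq_dist a b
    obtain ⟨w, haw⟩ : ∃ w, G.Adj a w := by
      cases p with
      | nil => exact absurd rfl hab
      | cons h q => exact ⟨_, h⟩
    have key : ∀ (x y : V) (q : G.Walk x y), x = a ∨ x = w → y = a ∨ y = w := by
      intro x y q
      induction q with
      | nil => exact id
      | @cons x z y h q ih =>
        intro hx
        apply ih
        rcases hx with rfl | rfl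
        · right
          exact (Set.ncard_le_one (Set.toFinite _)).mp (hone x) _ h _ haw
        · left
          exact (Set.ncard_le_one (Set.toFinite _)).mp (hone x) _ h _ haw.symm
    have huniv : ∀ y : V, y = a ∨ y = w := fun y =>
      key a y (hconn.preconnected a y).some (Or.inl rfl)
    have hsub : (Set.univ : Set V) ⊆ {a, w} := fun y _ => huniv y
    have hcard : Fintype.card V ≤ 2 := by
      calc Fintype.card V = (Set.univ : Set V).ncard := by
              rw [Set.ncard_univ, Nat.card_eq_fintype_card]
        _ ≤ ({a, w} : Set V).ncard := Set.ncard_le_ncard hsub (Set.toFinite _)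
        _ ≤ 2 := le_trans (Set.ncard_insert_le _ _) (by simp)
    omega
  obtain ⟨v, hv⟩ := hvx
  exact le_trans hv (ncard_le_maxDeg G v)

lemma key_distinguishing [Fintype V] (G : SimpleGraph V)
    (hconn : G.Connected) (hn : 3 ≤ Fintype.card V) :
    ∃ c : (V ⊕ G.edgeSet) → Fin (maxDeg G), ∀ φ : middleGraph G ≃g middleGraph G,
      (∀ x, c (φ x) = c x) → ∀ x, φ x = x := by
  classical
  have hΔ2 : 2 ≤ maxDeg G := two_le_maxDeg hconn hn
  obtain ⟨r⟩ : Nonempty V := Fintype.card_pos_iff.mp (by omega)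
  set Δ := maxDeg G with hΔdef
  set Sv : V → Set V := fun u => {w | G.Adj u w ∧ G.dist r w = G.dist r u + 1} with hSv
  have hScard : ∀ u, (Sv u).ncard ≤ Δ := fun u =>
    le_trans (Set.ncard_le_ncard (fun w hw => hw.1) (Set.toFinite _)) (ncard_le_maxDeg G u)
  choose g hg using fun u => exists_injOn_fin (hScard u) (by omega)
  set F : V → V → Fin Δ := fun a b =>
    if G.dist r a + 1 = G.dist r b then g a b
    else if G.dist r b + 1 = G.dist r a then g b a else ⟨0, by omega⟩ with hF
  have hFsymm : ∀ a b, F a b = F b a := by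
    intro a b
    simp only [hF]
    by_cases h1 : G.dist r a + 1 = G.dist r b
    · rw [if_pos h1, if_neg (by omega), if_pos h1]
    · by_cases h2 : G.dist r b + 1 = G.dist r a
      · rw [if_neg h1, if_pos h2, if_pos h2]
      · rw [if_neg h1, if_neg h2, if_neg h2, if_neg h1]
  set cE : G.edgeSet → Fin Δ := fun e => Sym2.lift ⟨F, hFsymm⟩ (e : Sym2 V) with hcE
  refine ⟨Sum.elim (fun v => if v = r then ⟨1, by omega⟩ else ⟨0, by omega⟩) cE, ?_⟩
  intro φ hpres
  obtain ⟨σ, hinj, hσ, hadj, hτ, hE⟩ := exists_sigma φ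
  obtain ⟨σ', hinj', hσ', hadj', hτ', hE'⟩ := exists_sigma φ.symm
  have hσ'σ : ∀ v, σ' (σ v) = v := by
    intro v
    have h1 : φ.symm (φ (Sum.inl v)) = Sum.inl v := φ.symm_apply_apply _
    rw [hσ, hσ'] at h1
    simpa using h1
  have hdist : ∀ a b, G.dist (σ a) (σ b) = G.dist a b := by
    intro a b
    refine le_antisymm (dist_map_le hconn σ hadj a b) ?_
    have := dist_map_le hconn σ' hadj' (σ a) (σ b)
    rwa [hσ'σ, hσ'σ] at this
  have hr : σ r = r := by
    have h1 := hpres (Sum.inl r)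
    rw [hσ] at h1
    simp only [Sum.elim_inl, if_pos rfl] at h1
    by_contra hne
    rw [if_neg hne] at h1
    have := congrArg Fin.val h1
    simp at this
  have hfix : ∀ n v, G.dist r v = n → σ v = v := by
    intro n
    induction n using Nat.strong_induction_on with
    | _ n ih =>
      intro v hv
      cases n with
      | zero =>
        have hvr : r = v := (hconn.dist_eq_zero_iff).mp hv
        rw [← hvr]; exact hr
      | succ i =>
        have hvner : v ≠ r := by
          intro h; rw [h, SimpleGraph.dist_self] at hv; omega
        obtain ⟨p, hp⟩ := hconn.exists_walk_length_eq_dist r v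
        obtain ⟨u, huv, q, hq⟩ := SimpleGraph.Walk.exists_eq_cons_of_ne
          hvner p.reverse
        have hqlen : q.length = i := by
          have := congrArg SimpleGraph.Walk.length hq
          rw [SimpleGraph.Walk.length_reverse, hp,
            SimpleGraph.Walk.length_cons] at this
          omega
        have hdru_le : G.dist r u ≤ i := by
          have := SimpleGraph.dist_le q.reverse
          rwa [SimpleGraph.Walk.length_reverse, hqlen] at this
        have hdru : G.dist r u = i := by
          have htri : G.dist r v ≤ G.dist r u + G.dist u v := hconn.dist_triangle
          have h1 : G.dist u v ≤ 1 := by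
            have := SimpleGraph.dist_le (huv.symm.toWalk)
            simpa using this
          omega
        have hu : σ u = u := ih i (by omega) u hdru
        have hadjuv : G.Adj u v := huv.symm
        have hσv_adj : G.Adj u (σ v) := by
          have := hadj u v hadjuv; rwa [hu] at this
        have hdistσv : G.dist r (σ v) = i + 1 := by
          have h1 := hdist r v
          rw [hr] at h1
          rw [h1, hv]
        have he1 : s(u, v) ∈ G.edgeSet := hadjuv
        obtain ⟨f, hf⟩ := hE ⟨s(u, v), he1⟩
        have hfval : (f : Sym2 V) = s(u, σ v) := by
          rw [hτ _ f hf, Sym2.map_pair_eq, hu]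
        have hcpres := hpres (Sum.inr ⟨s(u, v), he1⟩)
        rw [hf] at hcpres
        simp only [Sum.elim_inr] at hcpres
        have hc1 : cE f = F u (σ v) := by
          rw [hcE]
          simp only [hfval]
          rfl
        have hc2 : cE ⟨s(u, v), he1⟩ = F u v := rfl
        rw [hc1, hc2] at hcpres
        have hcase1 : G.dist r u + 1 = G.dist r v := by omega
        have hcase2 : G.dist r u + 1 = G.dist r (σ v) := by omega
        rw [hF] at hcpres
        simp only [if_pos hcase1, if_pos hcase2] at hcpres
        have hm1 : σ v ∈ Sv u := ⟨hσv_adj, by omega⟩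
        have hm2 : v ∈ Sv u := ⟨hadjuv, by omega⟩
        exact hg u hm1 hm2 hcpres
  have hfix' : ∀ v, σ v = v := fun v => hfix (G.dist r v) v rfl
  intro x
  cases x with
  | inl v => rw [hσ, hfix']
  | inr e =>
    obtain ⟨f, hf⟩ := hE e
    have h1 := hτ e f hf
    have h2 : (f : Sym2 V) = (e : Sym2 V) := by
      obtain ⟨a, b, hab, he⟩ := edge_exists_pair e
      rw [h1, he, Sym2.map_pair_eq, hfix', hfix']
    rw [hf]
    exact congrArg _ (Subtype.ext h2)

lemma map_edge_mem {G : SimpleGraph V} (σ : G ≃g G) {e : Sym2 V} (he : e ∈ G.edgeSet) :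
    Sym2.map σ e ∈ G.edgeSet := by
  induction e using Sym2.ind with
  | _ a b =>
    rw [Sym2.map_pair_eq]
    exact G.mem_edgeSet.mpr (σ.map_rel_iff.mpr (G.mem_edgeSet.mp he))

/-- Lift an automorphism of `G` to an automorphism of `middleGraph G`. -/
def liftIso {G : SimpleGraph V} (σ : G ≃g G) : middleGraph G ≃g middleGraph G where
  toEquiv := Equiv.sumCongr σ.toEquiv
    { toFun := fun e => ⟨Sym2.map σ e.1, map_edge_mem σ e.2⟩
      invFun := fun e => ⟨Sym2.map σ.symm e.1, map_edge_mem σ.symm e.2⟩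
      left_inv := by
        rintro ⟨e, he⟩
        apply Subtype.ext
        simp only [Sym2.map_map]
        induction e using Sym2.ind with
        | _ a b => simp [Sym2.map_pair_eq]
      right_inv := by
        rintro ⟨e, he⟩
        apply Subtype.ext
        simp only [Sym2.map_map]
        induction e using Sym2.ind with
        | _ a b => simp [Sym2.map_pair_eq] }
  map_rel_iff' := by
    rintro (u | e) (v | f)
    · exact Iff.rfl
    · show σ u ∈ Sym2.map σ (f : Sym2 V) ↔ u ∈ (f : Sym2 V)
      constructor
      · intro h
        obtain ⟨a, ha, hae⟩ := Sym2.mem_map.mp h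
        have : a = u := σ.injective hae
        rwa [← this]
      · intro h; exact Sym2.mem_map.mpr ⟨u, h, rfl⟩
    · show σ v ∈ Sym2.map σ (e : Sym2 V) ↔ v ∈ (e : Sym2 V)
      constructor
      · intro h
        obtain ⟨a, ha, hae⟩ := Sym2.mem_map.mp h
        have : a = v := σ.injective hae
        rwa [← this]
      · intro h; exact Sym2.mem_map.mpr ⟨v, h, rfl⟩
    · show (¬ _ = _ ∧ ∃ u, u ∈ Sym2.map σ (e : Sym2 V) ∧ u ∈ Sym2.map σ (f : Sym2 V)) ↔ _
      constructor
      · rintro ⟨hne, w, hw1, hw2⟩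
        refine ⟨fun h => hne (by rw [h]), ?_⟩
        obtain ⟨a, ha, hae⟩ := Sym2.mem_map.mp hw1
        obtain ⟨b, hb, hbe⟩ := Sym2.mem_map.mp hw2
        have : a = b := σ.injective (by rw [hae, hbe])
        exact ⟨a, ha, this ▸ hb⟩
      · rintro ⟨hne, w, hw1, hw2⟩
        refine ⟨?_, σ w, Sym2.mem_map.mpr ⟨w, hw1, rfl⟩, Sym2.mem_map.mpr ⟨w, hw2, rfl⟩⟩
        intro h
        apply hne
        have h' : Sym2.map σ (e : Sym2 V) = Sym2.map σ (f : Sym2 V) :=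
          congrArg Subtype.val h
        exact Subtype.ext (Sym2.map.injective σ.injective h')

end AuxProofs

/-- For a connected graph `G` of order `n ≥ 3`, `D(M(G)) ≤ Δ(G)`;
moreover the bound is sharp: if `G` is a cycle then `D(M(G)) = 2 = Δ(G)`. -/
theorem stmt_8 {V : Type*} [Fintype V] (G : SimpleGraph V)
    (hconn : G.Connected) (hn : 3 ≤ Fintype.card V) :
    distinguishingNumber (middleGraph G) ≤ maxDeg G ∧
    (Nonempty (G ≃g cycleGraph (Fintype.card V)) →
      distinguishingNumber (middleGraph G) = 2 ∧ maxDeg G = 2) := by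
  classical
  have hkey := key_distinguishing G hconn hn
  have h1 : distinguishingNumber (middleGraph G) ≤ maxDeg G := Nat.sInf_le hkey
  refine ⟨h1, ?_⟩
  rintro ⟨ψ⟩
  obtain ⟨m, hm⟩ : ∃ m, Fintype.card V = m + 3 := ⟨Fintype.card V - 3, by omega⟩
  rw [hm] at ψ
  obtain ⟨v0⟩ : Nonempty V := Fintype.card_pos_iff.mp (by omega)
  -- maxDeg G = 2
  have hdeg : ∀ v : V, (G.neighborSet v).ncard = 2 := by
    intro v
    have hcongr : (G.neighborSet v).ncard
        = ((cycleGraph (m + 3)).neighborSet (ψ v)).ncard := by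
      rw [← Nat.card_coe_set_eq, ← Nat.card_coe_set_eq]
      exact Nat.card_congr (ψ.mapNeighborSet v)
    have hNS : (cycleGraph (m + 3)).neighborSet (ψ v) = {ψ v - 1, ψ v + 1} :=
      cycleGraph_neighborSet
    rw [hcongr, hNS, Set.ncard_pair]
    intro h
    have h2 : ψ v + (1 + 1) = ψ v := by rw [← add_assoc, ← h, sub_add_cancel]
    have h3 : (1 : Fin (m + 3)) + 1 = 0 := add_eq_left.mp h2
    have h4 : ((1 : Fin (m + 3)) + 1).val = 2 := by
      rw [Fin.val_add]
      have hv1 : (1 : Fin (m + 3)).val = 1 := by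
        rw [Fin.val_one']
        exact Nat.mod_eq_of_lt (by omega)
      rw [hv1]
      exact Nat.mod_eq_of_lt (by omega)
    rw [h3] at h4
    simp at h4
  have hmaxdeg : maxDeg G = 2 := by
    have hset : {k | ∃ v : V, k = (G.neighborSet v).ncard} = {2} := by
      ext k
      simp only [Set.mem_setOf_eq, Set.mem_singleton_iff]
      constructor
      · rintro ⟨v, rfl⟩; exact hdeg v
      · rintro rfl; exact ⟨v0, (hdeg v0).symm⟩
    rw [maxDeg, hset, csSup_singleton]
  refine ⟨?_, hmaxdeg⟩
  -- a nontrivial automorphism of middleGraph G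
  have hone : (1 : Fin (m + 3)) ≠ 0 := by
    intro h
    have h' := congrArg Fin.val h
    rw [Fin.val_one', Nat.mod_eq_of_lt (by omega)] at h'
    simp at h'
  have hrotadj : ∀ a b : Fin (m + 3),
      ((cycleGraph (m + 3)).Adj (a + 1) (b + 1) ↔ (cycleGraph (m + 3)).Adj a b) := by
    intro a b
    rw [cycleGraph_adj', cycleGraph_adj', add_sub_add_right_eq_sub,
      add_sub_add_right_eq_sub]
  let rot : cycleGraph (m + 3) ≃g cycleGraph (m + 3) :=
    ⟨Equiv.addRight (1 : Fin (m + 3)), by intro a b; exact hrotadj a b⟩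
  have hrot1 : ∀ x : Fin (m + 3), rot x = x + 1 := fun x => rfl
  let σ0 : G ≃g G := (ψ.trans rot).trans ψ.symm
  have hσ0 : ∀ x, σ0 x = ψ.symm (rot (ψ x)) := fun x => rfl
  have hσ0ne : σ0 (ψ.symm 0) ≠ ψ.symm 0 := by
    intro h
    rw [hσ0, RelIso.apply_symm_apply, hrot1, zero_add] at h
    exact hone (ψ.symm.injective h)
  let φ0 : middleGraph G ≃g middleGraph G := liftIso σ0
  have hφ0ne : φ0 (Sum.inl (ψ.symm 0)) ≠ Sum.inl (ψ.symm 0) := by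
    intro h
    have h2 : (Sum.inl (σ0 (ψ.symm 0)) : V ⊕ G.edgeSet) = Sum.inl (ψ.symm 0) := h
    exact hσ0ne (by simpa using h2)
  -- distinguishingNumber = 2
  have h2mem : 2 ∈ {d | ∃ c : (V ⊕ G.edgeSet) → Fin d,
      ∀ φ : middleGraph G ≃g middleGraph G, (∀ x, c (φ x) = c x) → ∀ x, φ x = x} := by
    rw [← hmaxdeg]; exact hkey
  have hle : distinguishingNumber (middleGraph G) ≤ 2 := Nat.sInf_le h2mem
  have hlow : ∀ d : ℕ, (∃ c : (V ⊕ G.edgeSet) → Fin d,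
      ∀ φ : middleGraph G ≃g middleGraph G, (∀ x, c (φ x) = c x) → ∀ x, φ x = x) →
      2 ≤ d := by
    intro d hd
    obtain ⟨c, hc⟩ := hd
    by_contra hd2
    push_neg at hd2
    interval_cases d
    · exact (c (Sum.inl v0)).elim0
    · exact hφ0ne (hc φ0 (fun x => Subsingleton.elim _ _) _)
  have hge : 2 ≤ distinguishingNumber (middleGraph G) :=
    hlow _ (Nat.sInf_mem ⟨2, h2mem⟩)
  exact le_antisymm hle hge
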